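/- Let q ∈ [−1,1], β_n = sqrt(∑_{j=0}^{n} q^j), C = ∑_{n=0}^{L-1} β_n |e_n⟩⟨e_{n+1}| on ℂ^{L+1}, and K = (β_L²/(L+1)) |e_L⟩⟨e_L|. Then C C† − q C† C = 1 − (L+1) K. -/

import Mathlib

open Matrix

theorem TQ_qmutator (L : ℕ) (q : ℝ) (hq1 : -1 ≤ q) (hq2 : q ≤ 1)
    (β : ℕ → ℝ) (hβ : ∀ n, β n = Real.sqrt (∑ j ∈ Finset.range (n+1), q ^ j))
    (C : Matrix (Fin (L+1)) (Fin (L+1)) ℂ)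
    (hC : C = ∑ n : Fin L, ((β n : ℝ) : ℂ) •
      Matrix.single n.castSucc n.succ 1)
    (K : Matrix (Fin (L+1)) (Fin (L+1)) ℂ)
    (hK : K = (((β L) ^ 2 / (L+1) : ℝ) : ℂ) •
      Matrix.single (Fin.last L) (Fin.last L) 1) :
    C * Cᴴ - (q : ℂ) • (Cᴴ * C) = 1 - ((L+1 : ℕ) : ℂ) • K := by
  set s : ℕ → ℝ := fun n => ∑ j ∈ Finset.range (n+1), q ^ j with hs
  have hsnn : ∀ n, 0 ≤ s n := by
    intro n
    rcases eq_or_lt_of_le hq1 with h1 | h1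
    · simp only [hs, ← h1, neg_one_geom_sum]
      split <;> norm_num
    · exact (geom_sum_pos' (by linarith) (Nat.succ_ne_zero n)).le
  have hβsq : ∀ n, (β n)^2 = s n := fun n => by rw [hβ]; exact Real.sq_sqrt (hsnn n)
  have hrec : ∀ n : ℕ, s (n+1) = q * s n + 1 := by
    intro n; simp only [hs]; exact geom_sum_succ
  have hs0 : s 0 = 1 := by simp [hs]
  -- entrywise formula for C
  have hCe : ∀ i j : Fin (L+1), C i j =
      if (i:ℕ)+1 = (j:ℕ) then ((β (i:ℕ) : ℝ) : ℂ) else 0 := by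
    intro i j
    rw [hC]
    simp only [Matrix.sum_apply, Matrix.smul_apply, Matrix.single,
      Matrix.of_apply, smul_eq_mul, mul_ite, mul_one, mul_zero]
    by_cases h : (i:ℕ)+1 = (j:ℕ)
    · have hiL : (i:ℕ) < L := by have := j.isLt; omega
      rw [Finset.sum_eq_single (⟨(i:ℕ), hiL⟩ : Fin L)]
      · simp [Fin.ext_iff, h]
      · intro n _ hn
        rw [if_neg]
        rintro ⟨h1, h2⟩
        exact hn (Fin.ext (by simpa [Fin.ext_iff] using h1))
      · intro h; exact absurd (Finset.mem_univ _) h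
    · rw [if_neg h, Finset.sum_eq_zero]
      intro n _
      rw [if_neg]
      rintro ⟨h1, h2⟩
      apply h
      have e1 : (n:ℕ) = (i:ℕ) := by simpa [Fin.ext_iff] using h1
      have e2 : (n:ℕ)+1 = (j:ℕ) := by simpa [Fin.ext_iff] using h2
      omega
  ext i j
  simp only [Matrix.sub_apply, Matrix.smul_apply, Matrix.mul_apply,
    Matrix.one_apply, hK, Matrix.single, Matrix.of_apply,
    Matrix.conjTranspose_apply, hCe, smul_eq_mul]
  have hstar : ∀ (P : Prop) [Decidable P] (x : ℝ),
      star (if P then ((x:ℝ):ℂ) else 0) = if P then ((x:ℝ):ℂ) else 0 := by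
    intro P _ x; split <;> simp [Complex.conj_ofReal]
  simp only [hstar]
  have hsum1 : (∑ k : Fin (L+1),
      (if (i:ℕ)+1 = (k:ℕ) then ((β (i:ℕ):ℝ):ℂ) else 0) *
      (if (j:ℕ)+1 = (k:ℕ) then ((β (j:ℕ):ℝ):ℂ) else 0)) =
      if i = j ∧ (i:ℕ) < L then ((s (i:ℕ) : ℝ) : ℂ) else 0 := by
    by_cases h : i = j ∧ (i:ℕ) < L
    · obtain ⟨rfl, hiL⟩ := h
      rw [if_pos ⟨rfl, hiL⟩, Finset.sum_eq_single (⟨(i:ℕ)+1, by omega⟩ : Fin (L+1))]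
      · rw [← hβsq]
        push_cast
        simp [sq]
      · intro k _ hk
        rw [if_neg, zero_mul]
        intro hh; exact hk (Fin.ext hh.symm)
      · intro h; exact absurd (Finset.mem_univ _) h
    · rw [if_neg h, Finset.sum_eq_zero]
      intro k _
      by_cases h1 : (i:ℕ)+1 = (k:ℕ)
      · have h2 : ¬((j:ℕ)+1 = (k:ℕ)) := by
          intro hh
          exact h ⟨Fin.ext (by omega), by have := k.isLt; omega⟩
        rw [if_neg h2, mul_zero]
      · rw [if_neg h1, zero_mul]
  have hsum2 : (∑ k : Fin (L+1),
      (if (k:ℕ)+1 = (i:ℕ) then ((β (k:ℕ):ℝ):ℂ) else 0) *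
      (if (k:ℕ)+1 = (j:ℕ) then ((β (k:ℕ):ℝ):ℂ) else 0)) =
      if i = j ∧ 0 < (i:ℕ) then ((s ((i:ℕ)-1) : ℝ) : ℂ) else 0 := by
    by_cases h : i = j ∧ 0 < (i:ℕ)
    · obtain ⟨rfl, hi0⟩ := h
      rw [if_pos ⟨rfl, hi0⟩,
        Finset.sum_eq_single (⟨(i:ℕ)-1, by have := i.isLt; omega⟩ : Fin (L+1))]
      · rw [← hβsq]
        have hc : ((⟨(i:ℕ)-1, by have := i.isLt; omega⟩ : Fin (L+1)) : ℕ) + 1 = (i:ℕ) := by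
          simp; omega
        rw [if_pos hc]
        push_cast
        simp [sq]
      · intro k _ hk
        rw [if_neg, zero_mul]
        intro hh; exact hk (Fin.ext (by simp; omega))
      · intro h; exact absurd (Finset.mem_univ _) h
    · rw [if_neg h, Finset.sum_eq_zero]
      intro k _
      by_cases h1 : (k:ℕ)+1 = (i:ℕ)
      · have h2 : ¬((k:ℕ)+1 = (j:ℕ)) := by
          intro hh
          exact h ⟨Fin.ext (by omega), by omega⟩
        rw [if_neg h2, mul_zero]
      · rw [if_neg h1, zero_mul]
  rw [hsum1, hsum2]
  have hKval : ((L+1:ℕ):ℂ) * ((((β L)^2/(L+1) : ℝ)):ℂ) = ((s L : ℝ):ℂ) := by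
    have h0 : ((L:ℂ)+1) ≠ 0 := Nat.cast_add_one_ne_zero L
    rw [hβsq]
    push_cast
    field_simp
  by_cases hij : i = j
  · subst hij
    rw [if_pos rfl]
    by_cases hlast : i = Fin.last L
    · have hiL : (i:ℕ) = L := by simp [hlast]
      rw [if_neg (by rintro ⟨-, hh⟩; omega : ¬(i = i ∧ (i:ℕ) < L)),
        if_pos (show Fin.last L = i ∧ Fin.last L = i from ⟨hlast.symm, hlast.symm⟩), mul_one, hKval]
      by_cases h0 : 0 < (i:ℕ)
      · rw [if_pos ⟨rfl, h0⟩]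
        have hr : s L = q * s (L-1) + 1 := by
          have := hrec (L-1)
          rwa [Nat.sub_add_cancel (by omega)] at this
        rw [hiL, hr]
        push_cast
        ring
      · rw [if_neg (by rintro ⟨-, hh⟩; omega)]
        have hL0 : L = 0 := by omega
        simp [hL0, hs0]
    · have hiL : (i:ℕ) < L := by
        have h1 := i.isLt
        have h2 : (i:ℕ) ≠ L := fun h => hlast (Fin.ext (by simp [h]))
        omega
      rw [if_pos ⟨rfl, hiL⟩,
        if_neg (show ¬(Fin.last L = i ∧ Fin.last L = i) from fun h => hlast h.1.symm),
        mul_zero, mul_zero, sub_zero]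
      by_cases h0 : 0 < (i:ℕ)
      · rw [if_pos ⟨rfl, h0⟩]
        have hr : s (i:ℕ) = q * s ((i:ℕ)-1) + 1 := by
          have := hrec ((i:ℕ)-1)
          rwa [Nat.sub_add_cancel (by omega)] at this
        rw [hr]
        push_cast
        ring
      · rw [if_neg (by rintro ⟨-, hh⟩; omega)]
        have : (i:ℕ) = 0 := by omega
        simp [this, hs0]
  · rw [if_neg hij, if_neg (show ¬(i = j ∧ (i:ℕ) < L) from fun h => hij h.1),
      if_neg (show ¬(i = j ∧ 0 < (i:ℕ)) from fun h => hij h.1),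
      if_neg (show ¬(Fin.last L = i ∧ Fin.last L = j) from
        fun h => hij (h.1.symm.trans h.2))]
    simp
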